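/- The trivialisation map f ↦ f/λ₁² intertwines the homogeneous degree-2 Poisson bracket with the inhomogeneous Jacobi bracket: if f, g are Laurent polynomials in (μ⁰,μ¹,λ₀,λ₁) homogeneous of total degree 2, then ({f,g}_Λ)/λ₁² expressed in the coordinates v^{α̇} = μ^{α̇}/λ₁, z = λ₀/λ₁ equals the Jacobi bracket {f/λ₁², g/λ₁²} given by ∂_{v⁰}F ∂_{v¹}G − ∂_{v¹}F ∂_{v⁰}G + Λ((v^{α̇}∂_{v^{α̇}}F − 2F)∂_z G − (v^{α̇}∂_{v^{α̇}}G − 2G)∂_z F). -/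

import Mathlib

/-- Partial derivative in the `i`-th coordinate of a function on `ℂ⁴`. -/
noncomputable def pd4 (i : Fin 4) (f : (Fin 4 → ℂ) → ℂ) (p : Fin 4 → ℂ) : ℂ :=
  fderiv ℂ f p (Pi.single i 1)

/-- Partial derivative in the `i`-th coordinate of a function on `ℂ³`. -/
noncomputable def pd3 (i : Fin 3) (F : (Fin 3 → ℂ) → ℂ) (q : Fin 3 → ℂ) : ℂ :=
  fderiv ℂ F q (Pi.single i 1)

/-- The homogeneous Λ-deformed Poisson bracket in the twistor coordinates
`(μ⁰, μ¹, λ₀, λ₁)` (indexed `0,1,2,3`):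
`{f,g}_Λ = ∂_{μ⁰}f ∂_{μ¹}g − ∂_{μ¹}f ∂_{μ⁰}g + Λ(∂_{λ₀}f ∂_{λ₁}g − ∂_{λ₁}f ∂_{λ₀}g)`. -/
noncomputable def pb4 (Λ : ℂ) (f g : (Fin 4 → ℂ) → ℂ) (p : Fin 4 → ℂ) : ℂ :=
  pd4 0 f p * pd4 1 g p - pd4 1 f p * pd4 0 g p
    + Λ * (pd4 2 f p * pd4 3 g p - pd4 3 f p * pd4 2 g p)

/-- The inhomogeneous Jacobi bracket in the coordinates `(v⁰, v¹, z)`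
(indexed `0,1,2`):
`{F,G} = ∂_{v⁰}F ∂_{v¹}G − ∂_{v¹}F ∂_{v⁰}G
  + Λ((v^{α̇}∂_{v^{α̇}}F − 2F)∂_z G − (v^{α̇}∂_{v^{α̇}}G − 2G)∂_z F)`. -/
noncomputable def jb3 (Λ : ℂ) (F G : (Fin 3 → ℂ) → ℂ) (q : Fin 3 → ℂ) : ℂ :=
  pd3 0 F q * pd3 1 G q - pd3 1 F q * pd3 0 G q
    + Λ * ((q 0 * pd3 0 F q + q 1 * pd3 1 F q - 2 * F q) * pd3 2 G q
         - (q 0 * pd3 0 G q + q 1 * pd3 1 G q - 2 * G q) * pd3 2 F q)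

/-- `f` is (the function of) a Laurent polynomial in the four twistor
coordinates, homogeneous of total degree 2. -/
def IsLaurentDeg2 (f : (Fin 4 → ℂ) → ℂ) : Prop :=
  ∃ (S : Finset (Fin 4 → ℤ)) (c : (Fin 4 → ℤ) → ℂ),
    (∀ e ∈ S, e 0 + e 1 + e 2 + e 3 = 2) ∧
    ∀ p : Fin 4 → ℂ, f p = ∑ e ∈ S, c e * ∏ i : Fin 4, p i ^ (e i)

/-- The trivialisation `f ↦ f/λ₁²` in the coordinates `v^{α̇} = μ^{α̇}/λ₁`,
`z = λ₀/λ₁`: for homogeneous degree-2 `f` this is `F(v⁰,v¹,z) = f(v⁰,v¹,z,1)`. -/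
noncomputable def triv (f : (Fin 4 → ℂ) → ℂ) : (Fin 3 → ℂ) → ℂ :=
  fun q => f ![q 0, q 1, q 2, 1]

noncomputable def prj {n : ℕ} (j : Fin n) : (Fin n → ℂ) →L[ℂ] ℂ :=
  ContinuousLinearMap.proj j

lemma hasFDerivAt_mono {n : ℕ} (E : Fin n → ℤ) (p : Fin n → ℂ) (hp : ∀ j, p j ≠ 0) :
    HasFDerivAt (fun q : Fin n → ℂ => ∏ j, q j ^ E j)
      (∑ j, ((E j : ℂ) * (∏ k, p k ^ E k) * (p j)⁻¹) • prj j) p := by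
  have h : ∀ j ∈ Finset.univ, HasFDerivAt (fun q : Fin n → ℂ => q j ^ E j)
      (((E j : ℂ) * p j ^ (E j - 1)) • (prj j)) p := by
    intro j _
    exact (hasDerivAt_zpow (E j) (p j) (Or.inl (hp j))).comp_hasFDerivAt p (prj j).hasFDerivAt
  have := HasFDerivAt.finset_prod (u := Finset.univ) h
  refine this.congr_fderiv ?_
  refine Finset.sum_congr rfl fun j _ => ?_
  rw [smul_smul]
  congr 1
  rw [zpow_sub_one₀ (hp j),
    ← Finset.mul_prod_erase Finset.univ (fun k => p k ^ E k) (Finset.mem_univ j)]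
  ring

lemma pd_laurent {n : ℕ} (S : Finset (Fin 4 → ℤ)) (c : (Fin 4 → ℤ) → ℂ)
    (E : (Fin 4 → ℤ) → Fin n → ℤ) (p : Fin n → ℂ) (hp : ∀ j, p j ≠ 0) (i : Fin n) :
    fderiv ℂ (fun q : Fin n → ℂ => ∑ e ∈ S, c e * ∏ j, q j ^ E e j) p (Pi.single i 1)
      = ∑ e ∈ S, c e * ((E e i : ℂ) * (∏ k, p k ^ E e k) * (p i)⁻¹) := by
  have hD : HasFDerivAt (fun q : Fin n → ℂ => ∑ e ∈ S, c e * ∏ j, q j ^ E e j)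
      (∑ e ∈ S, c e • ∑ j, ((E e j : ℂ) * (∏ k, p k ^ E e k) * (p j)⁻¹) • prj j) p :=
    HasFDerivAt.fun_sum fun e _ => (hasFDerivAt_mono (E e) p hp).const_mul (c e)
  rw [hD.fderiv]
  rw [ContinuousLinearMap.sum_apply]
  refine Finset.sum_congr rfl fun e _ => ?_
  rw [ContinuousLinearMap.smul_apply, ContinuousLinearMap.sum_apply, smul_eq_mul]
  congr 1
  rw [Finset.sum_eq_single i]
  · simp [prj]
  · intro j _ hj
    simp [prj, Pi.single_eq_of_ne hj]
  · simp


/-- The trivialisation `f ↦ f/λ₁²` intertwines the homogeneous degree-2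
Poisson bracket with the inhomogeneous Jacobi bracket. -/
theorem trivialisation_intertwines (Λ : ℂ) (f g : (Fin 4 → ℂ) → ℂ)
    (hf : IsLaurentDeg2 f) (hg : IsLaurentDeg2 g)
    (v₀ v₁ z : ℂ) (hv₀ : v₀ ≠ 0) (hv₁ : v₁ ≠ 0) (hz : z ≠ 0) :
    pb4 Λ f g ![v₀, v₁, z, 1] = jb3 Λ (triv f) (triv g) ![v₀, v₁, z] := by
  obtain ⟨S, c, hS, hfeq⟩ := hf
  obtain ⟨T, d, hT, hgeq⟩ := hg
  have hf' : f = fun p => ∑ e ∈ S, c e * ∏ j, p j ^ e j := funext hfeq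
  have hg' : g = fun p => ∑ e ∈ T, d e * ∏ j, p j ^ e j := funext hgeq
  have hp : ∀ j : Fin 4, (![v₀, v₁, z, 1] : Fin 4 → ℂ) j ≠ 0 := by
    intro j; fin_cases j <;> simp [hv₀, hv₁, hz]
  have hq : ∀ j : Fin 3, (![v₀, v₁, z] : Fin 3 → ℂ) j ≠ 0 := by
    intro j; fin_cases j <;> simp [hv₀, hv₁, hz]
  have hP4 : ∀ e : Fin 4 → ℤ, (∏ k : Fin 4, (![v₀, v₁, z, 1] : Fin 4 → ℂ) k ^ e k)
      = v₀ ^ e 0 * v₁ ^ e 1 * z ^ e 2 := by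
    intro e
    rw [Fin.prod_univ_four]
    simp [one_zpow]
  -- pd4 of f and g
  have hDf : ∀ i : Fin 4, pd4 i f ![v₀, v₁, z, 1]
      = ∑ e ∈ S, c e * ((e i : ℂ) * (v₀ ^ e 0 * v₁ ^ e 1 * z ^ e 2)
          * ((![v₀, v₁, z, 1] : Fin 4 → ℂ) i)⁻¹) := by
    intro i
    rw [pd4, hf', pd_laurent S c (fun e => e) _ hp i]
    exact Finset.sum_congr rfl fun e _ => by rw [hP4 e]
  have hDg : ∀ i : Fin 4, pd4 i g ![v₀, v₁, z, 1]
      = ∑ e ∈ T, d e * ((e i : ℂ) * (v₀ ^ e 0 * v₁ ^ e 1 * z ^ e 2)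
          * ((![v₀, v₁, z, 1] : Fin 4 → ℂ) i)⁻¹) := by
    intro i
    rw [pd4, hg', pd_laurent T d (fun e => e) _ hp i]
    exact Finset.sum_congr rfl fun e _ => by rw [hP4 e]
  -- triv as Laurent in 3 variables
  have htf : triv f = fun q : Fin 3 → ℂ =>
      ∑ e ∈ S, c e * ∏ j : Fin 3, q j ^ (![e 0, e 1, e 2] : Fin 3 → ℤ) j := by
    funext q
    rw [triv, hf']
    refine Finset.sum_congr rfl fun e _ => ?_
    congr 1
    rw [Fin.prod_univ_four, Fin.prod_univ_three]
    simp [one_zpow]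
  have htg : triv g = fun q : Fin 3 → ℂ =>
      ∑ e ∈ T, d e * ∏ j : Fin 3, q j ^ (![e 0, e 1, e 2] : Fin 3 → ℤ) j := by
    funext q
    rw [triv, hg']
    refine Finset.sum_congr rfl fun e _ => ?_
    congr 1
    rw [Fin.prod_univ_four, Fin.prod_univ_three]
    simp [one_zpow]
  have hP3 : ∀ e : Fin 4 → ℤ, (∏ k : Fin 3, (![v₀, v₁, z] : Fin 3 → ℂ) k
        ^ (![e 0, e 1, e 2] : Fin 3 → ℤ) k)
      = v₀ ^ e 0 * v₁ ^ e 1 * z ^ e 2 := by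
    intro e
    rw [Fin.prod_univ_three]
    simp
  have hF : triv f ![v₀, v₁, z] = ∑ e ∈ S, c e * (v₀ ^ e 0 * v₁ ^ e 1 * z ^ e 2) := by
    rw [htf]
    exact Finset.sum_congr rfl fun e _ => by rw [hP3 e]
  have hG : triv g ![v₀, v₁, z] = ∑ e ∈ T, d e * (v₀ ^ e 0 * v₁ ^ e 1 * z ^ e 2) := by
    rw [htg]
    exact Finset.sum_congr rfl fun e _ => by rw [hP3 e]
  have hDF : ∀ i : Fin 3, pd3 i (triv f) ![v₀, v₁, z]
      = ∑ e ∈ S, c e * (((![e 0, e 1, e 2] : Fin 3 → ℤ) i : ℂ)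
          * (v₀ ^ e 0 * v₁ ^ e 1 * z ^ e 2) * ((![v₀, v₁, z] : Fin 3 → ℂ) i)⁻¹) := by
    intro i
    rw [pd3, htf, pd_laurent S c (fun e => ![e 0, e 1, e 2]) _ hq i]
    exact Finset.sum_congr rfl fun e _ => by rw [hP3 e]
  have hDG : ∀ i : Fin 3, pd3 i (triv g) ![v₀, v₁, z]
      = ∑ e ∈ T, d e * (((![e 0, e 1, e 2] : Fin 3 → ℤ) i : ℂ)
          * (v₀ ^ e 0 * v₁ ^ e 1 * z ^ e 2) * ((![v₀, v₁, z] : Fin 3 → ℂ) i)⁻¹) := by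
    intro i
    rw [pd3, htg, pd_laurent T d (fun e => ![e 0, e 1, e 2]) _ hq i]
    exact Finset.sum_congr rfl fun e _ => by rw [hP3 e]
  rw [pb4, jb3, hDf 0, hDf 1, hDf 2, hDf 3, hDg 0, hDg 1, hDg 2, hDg 3,
    hDF 0, hDF 1, hDF 2, hDG 0, hDG 1, hDG 2, hF, hG]
  simp only [Matrix.cons_val_zero, Matrix.cons_val_one, Matrix.head_cons, Matrix.cons_val_two,
    Matrix.tail_cons, Matrix.cons_val_three, Matrix.head_fin_const, inv_one, mul_one]
  congr 2
  have hcS : v₀ * (∑ x ∈ S, c x * (↑(x 0) * (v₀ ^ x 0 * v₁ ^ x 1 * z ^ x 2) * v₀⁻¹))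
        + v₁ * (∑ x ∈ S, c x * (↑(x 1) * (v₀ ^ x 0 * v₁ ^ x 1 * z ^ x 2) * v₁⁻¹))
        - 2 * ∑ e ∈ S, c e * (v₀ ^ e 0 * v₁ ^ e 1 * z ^ e 2)
      = ∑ x ∈ S, c x * (((x 0 : ℂ) + (x 1 : ℂ) - 2) * (v₀ ^ x 0 * v₁ ^ x 1 * z ^ x 2)) := by
    rw [Finset.mul_sum, Finset.mul_sum, ← Finset.sum_add_distrib, Finset.mul_sum, ← Finset.sum_sub_distrib]
    refine Finset.sum_congr rfl fun x _ => ?_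
    field_simp
  have hcT : v₀ * (∑ x ∈ T, d x * (↑(x 0) * (v₀ ^ x 0 * v₁ ^ x 1 * z ^ x 2) * v₀⁻¹))
        + v₁ * (∑ x ∈ T, d x * (↑(x 1) * (v₀ ^ x 0 * v₁ ^ x 1 * z ^ x 2) * v₁⁻¹))
        - 2 * ∑ e ∈ T, d e * (v₀ ^ e 0 * v₁ ^ e 1 * z ^ e 2)
      = ∑ x ∈ T, d x * (((x 0 : ℂ) + (x 1 : ℂ) - 2) * (v₀ ^ x 0 * v₁ ^ x 1 * z ^ x 2)) := by
    rw [Finset.mul_sum, Finset.mul_sum, ← Finset.sum_add_distrib, Finset.mul_sum, ← Finset.sum_sub_distrib]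
    refine Finset.sum_congr rfl fun x _ => ?_
    field_simp
  rw [hcS, hcT,
    mul_comm (∑ x ∈ T, d x * (((x 0 : ℂ) + (x 1 : ℂ) - 2) * (v₀ ^ x 0 * v₁ ^ x 1 * z ^ x 2)))
      (∑ x ∈ S, c x * (↑(x 2) * (v₀ ^ x 0 * v₁ ^ x 1 * z ^ x 2) * z⁻¹))]
  have key : ∀ A A' : (Fin 4 → ℤ) → ℂ, ∀ B B' : (Fin 4 → ℤ) → ℂ,
      (∑ x ∈ S, A x) * (∑ y ∈ T, B y) - (∑ x ∈ S, A' x) * (∑ y ∈ T, B' y)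
        = ∑ x ∈ S, ∑ y ∈ T, (A x * B y - A' x * B' y) := by
    intro A A' B B'
    rw [Finset.sum_mul_sum, Finset.sum_mul_sum, ← Finset.sum_sub_distrib]
    exact Finset.sum_congr rfl fun x _ => (Finset.sum_sub_distrib _ _).symm
  rw [key, key]
  refine Finset.sum_congr rfl fun x hx => Finset.sum_congr rfl fun y hy => ?_
  have hx3 : ((x 3 : ℤ) : ℂ) = 2 - x 0 - x 1 - x 2 := by
    have := congrArg (Int.cast : ℤ → ℂ) (hS x hx)
    push_cast at this
    linear_combination this
  have hy3 : ((y 3 : ℤ) : ℂ) = 2 - y 0 - y 1 - y 2 := by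
    have := congrArg (Int.cast : ℤ → ℂ) (hT y hy)
    push_cast at this
    linear_combination this
  rw [hx3, hy3]
  ring
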